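/- Let B be a C*-algebra and z ∈ B. Then z lies in the norm-closed linear span of the set { z (z* z)^n : n ∈ ℕ, n ≥ 1 }. (Consequently, z lies in the norm-closure of z⟨z⟩*z, where ⟨z⟩ is the closed subspace generated by z under triple products.) -/

import Mathlib

open scoped NNReal

/-- `spow x n = x ^ (n + 1)`, the `(n+1)`-st power in a (possibly non-unital) algebra. -/
def spow {B : Type*} [Mul B] (x : B) : ℕ → B
  | 0 => x
  | n + 1 => spow x n * x

lemma aux_bound {s : ℝ} (hs0 : 0 ≤ s) (hs1 : s ≤ 1) (k : ℕ) :
    s * (1 - s) ^ k * (k + 1 : ℝ) ≤ 1 := by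
  have hb : (1 : ℝ) + k * s ≤ (1 + s) ^ k := one_add_mul_le_pow (by linarith) k
  have h2 : (0:ℝ) ≤ (1 - s) ^ k := pow_nonneg (by linarith) k
  have h3 : ((1 + s) * (1 - s)) ^ k ≤ 1 :=
    pow_le_one₀ (by nlinarith) (by nlinarith)
  calc s * (1-s)^k * (k+1) = (s*(k+1)) * (1-s)^k := by ring
    _ ≤ (1 + k*s) * (1-s)^k := by nlinarith
    _ ≤ (1+s)^k * (1-s)^k := by nlinarith [pow_nonneg (by linarith : (0:ℝ) ≤ 1+s) k]
    _ = ((1+s)*(1-s))^k := (mul_pow _ _ _).symm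
    _ ≤ 1 := h3

set_option maxHeartbeats 1000000 in
/-- In a C*-algebra, every `z` lies in the norm-closed linear span of
`{ z (z* z)^n : n ≥ 1 }`. -/
theorem mem_closure_span_odd_powers {B : Type*} [NonUnitalCStarAlgebra B] (z : B) :
    z ∈ closure (Submodule.span ℂ {w : B | ∃ n : ℕ, w = z * spow (star z * z) n} :
      Set B) := by
  by_cases hz : z = 0
  · subst hz
    exact subset_closure (Submodule.zero_mem _)
  set a : B := star z * z with ha_def
  set N : Submodule ℂ B := Submodule.span ℂ {w : B | ∃ n : ℕ, w = z * spow a n} with hN_def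
  have ha : IsSelfAdjoint a := IsSelfAdjoint.star_mul_self z
  set R : ℝ := ‖a‖ with hR_def
  have hR : 0 < R := by
    rw [hR_def, ha_def]
    have : ‖star z * z‖ = ‖z‖ * ‖z‖ := CStarRing.norm_star_mul_self
    rw [this]
    have := norm_pos_iff.mpr hz
    positivity
  -- the spectrum bound
  have hspec : ∀ x ∈ quasispectrum ℝ a, 0 ≤ x ∧ x ≤ R := by
    intro x hx
    rw [Unitization.quasispectrum_eq_spectrum_inr' ℝ ℂ] at hx
    have hxa : x ∈ spectrum ℝ (star (z : Unitization ℂ B) * (z : Unitization ℂ B)) := by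
      rwa [ha_def, show ((star z * z : B) : Unitization ℂ B)
        = star (z : Unitization ℂ B) * (z : Unitization ℂ B) by simp] at hx
    refine ⟨spectrum_star_mul_self_nonneg x hxa, ?_⟩
    have h2 : ‖x‖ ≤ ‖((a : B) : Unitization ℂ B)‖ := spectrum.norm_le_norm_of_mem hx
    rw [Unitization.norm_inr] at h2
    calc x ≤ ‖x‖ := le_abs_self x
      _ ≤ R := h2
  -- N is closed under right multiplication by a
  have hNa : ∀ w ∈ N, w * a ∈ N := by
    intro w hw
    induction hw using Submodule.span_induction with
    | mem x hx =>
      obtain ⟨n, rfl⟩ := hx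
      exact Submodule.subset_span ⟨n + 1, by simp [spow, mul_assoc]⟩
    | zero => simp
    | add x y _ _ hx hy => simpa [add_mul] using N.add_mem hx hy
    | smul c x _ hx => simpa [smul_mul_assoc] using N.smul_mem c hx
  have hza : z * a ∈ N := Submodule.subset_span ⟨0, rfl⟩
  -- membership of the approximants
  have hu_mem : ∀ m : ℕ, z * cfcₙ (fun t : ℝ => 1 - (1 - t / R) ^ m) a ∈ N := by
    intro m
    induction m with
    | zero => simp
    | succ m ih =>
      have key : cfcₙ (fun t : ℝ => 1 - (1 - t / R) ^ (m + 1)) a =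
          cfcₙ (fun t : ℝ => 1 - (1 - t / R) ^ m) a + R⁻¹ • a -
            R⁻¹ • (cfcₙ (fun t : ℝ => 1 - (1 - t / R) ^ m) a * a) := by
        have h1 : (fun t : ℝ => 1 - (1 - t / R) ^ (m + 1)) =
            fun t : ℝ => ((1 - (1 - t / R) ^ m) + R⁻¹ • t) -
              R⁻¹ • ((1 - (1 - t / R) ^ m) * t) := by
          funext t
          simp only [smul_eq_mul]
          ring
        rw [h1, cfcₙ_sub _ _ a (by fun_prop) (by simp) (by fun_prop) (by simp),
          cfcₙ_add _ _ a (by fun_prop) (by simp) (by fun_prop) (by simp),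
          cfcₙ_smul _ _ a (by fun_prop) (by simp),
          cfcₙ_smul _ _ a (by fun_prop) (by simp),
          cfcₙ_mul _ _ a (by fun_prop) (by simp) (by fun_prop) (by simp),
          cfcₙ_id' ℝ a]
      rw [key]
      have h2 := N.smul_mem (R⁻¹ : ℂ) (hNa _ ih)
      have h3 := N.smul_mem (R⁻¹ : ℂ) hza
      have : z * (cfcₙ (fun t : ℝ => 1 - (1 - t / R) ^ m) a + R⁻¹ • a -
          R⁻¹ • (cfcₙ (fun t : ℝ => 1 - (1 - t / R) ^ m) a * a)) =
          z * cfcₙ (fun t : ℝ => 1 - (1 - t / R) ^ m) a + R⁻¹ • (z * a) -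
            R⁻¹ • (z * cfcₙ (fun t : ℝ => 1 - (1 - t / R) ^ m) a * a) := by
        simp [mul_add, mul_sub, mul_smul_comm, mul_assoc]
      rw [this]
      have hsmul : ∀ (w : B), w ∈ N → (R⁻¹ : ℝ) • w ∈ N := by
        intro w hw
        have : (R⁻¹ : ℝ) • w = ((R⁻¹ : ℝ) : ℂ) • w := by
          rw [Complex.coe_smul]
        rw [this]
        exact N.smul_mem _ hw
      exact N.sub_mem (N.add_mem ih (hsmul _ hza)) (hsmul _ (hNa _ ih))
  -- norm estimate
  have hnorm : ∀ m : ℕ, ‖z - z * cfcₙ (fun t : ℝ => 1 - (1 - t / R) ^ m) a‖ ≤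
      Real.sqrt (R / (2 * m + 1)) := by
    intro m
    set u := cfcₙ (fun t : ℝ => 1 - (1 - t / R) ^ m) a with hu_def
    have hu : IsSelfAdjoint u := by rw [hu_def]; exact cfcₙ_predicate _ a
    have hE : star (z - z * u) * (z - z * u) = a - a * u - u * a + u * (a * u) := by
      rw [star_sub, star_mul, hu.star_eq, ha_def]
      noncomm_ring
    have h_ta : cfcₙ (fun t : ℝ => t * (1 - (1 - t / R) ^ m)) a = a * u := by
      rw [cfcₙ_mul (fun x : ℝ => x) _ a (by fun_prop) (by simp) (by fun_prop) (by simp),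
        cfcₙ_id' ℝ a, hu_def]
    have h_at : cfcₙ (fun t : ℝ => (1 - (1 - t / R) ^ m) * t) a = u * a := by
      rw [cfcₙ_mul _ (fun x : ℝ => x) a (by fun_prop) (by simp) (by fun_prop) (by simp),
        cfcₙ_id' ℝ a, hu_def]
    have h_tat : cfcₙ (fun t : ℝ => (1 - (1 - t / R) ^ m) * (t * (1 - (1 - t / R) ^ m))) a
        = u * (a * u) := by
      rw [cfcₙ_mul _ _ a (by fun_prop) (by simp) (by fun_prop) (by simp), h_ta, hu_def]
    have hgfun : (fun t : ℝ => t * (1 - t / R) ^ (2 * m)) =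
        fun t : ℝ => t - t * (1 - (1 - t / R) ^ m) - (1 - (1 - t / R) ^ m) * t
          + (1 - (1 - t / R) ^ m) * (t * (1 - (1 - t / R) ^ m)) := by
      funext t; ring
    have hgc : cfcₙ (fun t : ℝ => t * (1 - t / R) ^ (2 * m)) a
        = a - a * u - u * a + u * (a * u) := by
      rw [hgfun, cfcₙ_add _ _ a (by fun_prop) (by simp) (by fun_prop) (by simp),
        cfcₙ_sub _ _ a (by fun_prop) (by simp) (by fun_prop) (by simp),
        cfcₙ_sub _ _ a (by fun_prop) (by simp) (by fun_prop) (by simp),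
        h_ta, h_at, h_tat, cfcₙ_id' ℝ a]
    have hsq : ‖z - z * u‖ * ‖z - z * u‖ ≤ R / (2 * m + 1) := by
      rw [← CStarRing.norm_star_mul_self, hE, ← hgc]
      refine norm_cfcₙ_le fun x hx => ?_
      obtain ⟨hx0, hxR⟩ := hspec x hx
      have hs0 : 0 ≤ x / R := div_nonneg hx0 hR.le
      have hs1 : x / R ≤ 1 := (div_le_one hR).mpr hxR
      have hbd := aux_bound hs0 hs1 (2 * m)
      push_cast at hbd
      have hpow : (0:ℝ) ≤ (1 - x / R) ^ (2 * m) := by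
        rw [show 2 * m = m + m from two_mul m, pow_add]
        exact mul_self_nonneg _
      rw [Real.norm_eq_abs, abs_of_nonneg (mul_nonneg hx0 hpow)]
      have hx_eq : x * (1 - x / R) ^ (2 * m) = R * ((x / R) * (1 - x / R) ^ (2 * m)) := by
        field_simp
      rw [hx_eq, le_div_iff₀ (by positivity)]
      nlinarith [mul_le_mul_of_nonneg_left hbd hR.le,
        mul_nonneg (mul_nonneg hs0 hpow) hR.le]
    have h1 : ‖z - z * u‖ = Real.sqrt (‖z - z * u‖ * ‖z - z * u‖) := by
      rw [Real.sqrt_mul_self (norm_nonneg _)]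
    rw [h1]
    exact Real.sqrt_le_sqrt hsq
  -- limits
  have hlim0 : Filter.Tendsto (fun m : ℕ => R / (2 * (m:ℝ) + 1)) Filter.atTop (nhds 0) :=
    Filter.Tendsto.div_atTop tendsto_const_nhds
      (Filter.tendsto_atTop_add_const_right _ 1
        (Filter.Tendsto.const_mul_atTop two_pos tendsto_natCast_atTop_atTop))
  have hlim1 : Filter.Tendsto (fun m : ℕ => Real.sqrt (R / (2 * (m:ℝ) + 1)))
      Filter.atTop (nhds 0) := by
    have := (Real.continuous_sqrt.tendsto 0).comp hlim0
    simpa [Function.comp_def] using this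
  have hdiff : Filter.Tendsto
      (fun m : ℕ => z - z * cfcₙ (fun t : ℝ => 1 - (1 - t / R) ^ m) a)
      Filter.atTop (nhds 0) := by
    rw [tendsto_zero_iff_norm_tendsto_zero]
    exact squeeze_zero (fun m => norm_nonneg _) hnorm hlim1
  have hlim : Filter.Tendsto
      (fun m : ℕ => z * cfcₙ (fun t : ℝ => 1 - (1 - t / R) ^ m) a)
      Filter.atTop (nhds z) := by
    have := Filter.Tendsto.sub
      (tendsto_const_nhds : Filter.Tendsto (fun _ : ℕ => z) Filter.atTop (nhds z)) hdiff
    simpa using this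
  exact mem_closure_of_tendsto hlim (Filter.Eventually.of_forall hu_mem)
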